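/- Let E' ≤ E be wald topologies with induced leaf partitions L_1,...,L_K and L'_1,...,L'_{K'}. If two distinct blocks L'_{α'}, L'_{α''} of E' are contained in a common block L_α of E, then there exists a split A|B ∈ E with L'_{α'} ⊆ A and L'_{α''} ⊆ B which admits no valid restriction to any block of E' (i.e., the split lies in R_{cut}). -/
import Mathlib


attribute [local instance] Classical.propDecidable

/-- A split: an unordered pair of finite sets of labels. -/
abbrev Split (N : ℕ) := Sym2 (Finset (Fin N))

namespace Wald

variable {N : ℕ}

/-- `e` is a split of the block `M`: `e = {A, B}` with `A, B` a partition of `M`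
into two nonempty parts. -/
def IsSplitOf (e : Split N) (M : Finset (Fin N)) : Prop :=
  ∃ A B : Finset (Fin N), e = s(A, B) ∧ A ∪ B = M ∧ Disjoint A B ∧
    A.Nonempty ∧ B.Nonempty

/-- Two splits `A|B` and `C|D` are compatible if one of the four intersections
`A∩C, A∩D, B∩C, B∩D` is empty. -/
def Compatible (e f : Split N) : Prop :=
  ∃ A B C D : Finset (Fin N), e = s(A, B) ∧ f = s(C, D) ∧
    (A ∩ C = ∅ ∨ A ∩ D = ∅ ∨ B ∩ C = ∅ ∨ B ∩ D = ∅)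

/-- The split `e = A|B` separates `u` and `v` if `u ∈ A` and `v ∈ B` (or vice versa). -/
def Separates (e : Split N) (u v : Fin N) : Prop :=
  ∃ A B : Finset (Fin N), e = s(A, B) ∧ u ∈ A ∧ v ∈ B

/-- The restriction `e|_{L'}` of a split `e = A|B`: `(A ∩ L')|(B ∩ L')`. -/
def restrict (e : Split N) (L' : Finset (Fin N)) : Split N :=
  Sym2.map (· ∩ L') e

/-- The underlying block `A ∪ B` of a split `e = A|B`. -/
def blockOf (e : Split N) : Finset (Fin N) :=
  Sym2.lift ⟨fun A B => A ∪ B, fun _ _ => Finset.union_comm _ _⟩ e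

/-- The restriction of `e = A|B` to `L'` is a valid split iff both
`A ∩ L'` and `B ∩ L'` are nonempty. -/
def ValidRestrict (e : Split N) (L' : Finset (Fin N)) : Prop :=
  ∃ A B : Finset (Fin N), e = s(A, B) ∧ (A ∩ L').Nonempty ∧ (B ∩ L').Nonempty

/-- A wald topology on the label set `{1,…,N}`: a partition of the labels into
blocks, together with a set of splits of the blocks, such that splits of a common
block are pairwise compatible and any two distinct labels of a common block are
separated by some split. -/
structure WaldTop (N : ℕ) where
  blocks : Finset (Finset (Fin N))
  splits : Finset (Split N)
  nonempty_blocks : ∀ B ∈ blocks, B.Nonempty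
  cover : ∀ u : Fin N, ∃! B, B ∈ blocks ∧ u ∈ B
  split_mem : ∀ e ∈ splits, ∃ B ∈ blocks, IsSplitOf e B
  compat : ∀ e ∈ splits, ∀ f ∈ splits, blockOf e = blockOf f → Compatible e f
  separating : ∀ B ∈ blocks, ∀ u ∈ B, ∀ v ∈ B, u ≠ v →
    ∃ e ∈ splits, Separates e u v

/-- The partial order `E' ≤ E` on wald topologies: refinement of the leaf
partitions, restriction of splits, and the cut property. -/
def LE' (E' E : WaldTop N) : Prop :=
  (∀ B' ∈ E'.blocks, ∃ B ∈ E.blocks, B' ⊆ B) ∧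
  (∀ e' ∈ E'.splits, ∃ e ∈ E.splits, restrict e (blockOf e') = e') ∧
  (∀ B₁ ∈ E'.blocks, ∀ B₂ ∈ E'.blocks, B₁ ≠ B₂ →
    ∀ B ∈ E.blocks, B₁ ⊆ B → B₂ ⊆ B →
      ∃ A C : Finset (Fin N), s(A, C) ∈ E.splits ∧ B₁ ⊆ A ∧ B₂ ⊆ C)

/-- `R_{e'}`: the splits of `E` whose restriction to the block of `e'` equals `e'`. -/
def Rset (E : WaldTop N) (e' : Split N) : Set (Split N) :=
  {e | e ∈ E.splits ∧ restrict e (blockOf e') = e'}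

/-- `R_dis`: the splits of `E` admitting a valid restriction to some block of `E'`
which does not belong to `E'`. -/
def Rdis (E' E : WaldTop N) : Set (Split N) :=
  {e | e ∈ E.splits ∧ ∃ B' ∈ E'.blocks, ValidRestrict e B' ∧ restrict e B' ∉ E'.splits}

/-- `R_cut`: the splits of `E` admitting no valid restriction to any block of `E'`. -/
def Rcut (E' E : WaldTop N) : Set (Split N) :=
  {e | e ∈ E.splits ∧ ∀ B' ∈ E'.blocks, ¬ ValidRestrict e B'}

/-- `E(u,v)`: the set of splits of `E` separating `u` and `v`. -/
def sepSet (E : WaldTop N) (u v : Fin N) : Set (Split N) :=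
  {e | e ∈ E.splits ∧ Separates e u v}

end Wald

namespace Wald

variable {N : ℕ}

lemma block_eq_of_mem {E : WaldTop N} {D₁ D₂ : Finset (Fin N)} (h₁ : D₁ ∈ E.blocks)
    (h₂ : D₂ ∈ E.blocks) {u : Fin N} (hu₁ : u ∈ D₁) (hu₂ : u ∈ D₂) : D₁ = D₂ := by
  obtain ⟨Bu, _, huniq⟩ := E.cover u
  rw [huniq D₁ ⟨h₁, hu₁⟩, huniq D₂ ⟨h₂, hu₂⟩]

lemma split_props {E : WaldTop N} {A C : Finset (Fin N)} (hs : s(A, C) ∈ E.splits) :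
    A ∪ C ∈ E.blocks ∧ Disjoint A C := by
  obtain ⟨M, hM, A₀, C₀, heq, hun, hdisj, _, _⟩ := E.split_mem _ hs
  rcases Sym2.eq_iff.mp heq with ⟨rfl, rfl⟩ | ⟨rfl, rfl⟩
  · exact ⟨hun ▸ hM, hdisj⟩
  · rw [Finset.union_comm]
    exact ⟨hun ▸ hM, hdisj.symm⟩

lemma compat_four {A C A' C' : Finset (Fin N)} (h : Compatible s(A, C) s(A', C')) :
    A ∩ A' = ∅ ∨ A ∩ C' = ∅ ∨ C ∩ A' = ∅ ∨ C ∩ C' = ∅ := by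
  obtain ⟨X, Y, Z, W, h1, h2, h3⟩ := h
  rcases Sym2.eq_iff.mp h1 with ⟨rfl, rfl⟩ | ⟨rfl, rfl⟩ <;>
    rcases Sym2.eq_iff.mp h2 with ⟨rfl, rfl⟩ | ⟨rfl, rfl⟩ <;> tauto

lemma valid_both {A C L : Finset (Fin N)} (h : ValidRestrict s(A, C) L) :
    (A ∩ L).Nonempty ∧ (C ∩ L).Nonempty := by
  obtain ⟨X, Y, heq, h1, h2⟩ := h
  rcases Sym2.eq_iff.mp heq with ⟨rfl, rfl⟩ | ⟨rfl, rfl⟩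
  · exact ⟨h1, h2⟩
  · exact ⟨h2, h1⟩

lemma key {E' E : WaldTop N} (h : LE' E' E) {B₁ B₂ B : Finset (Fin N)}
    (hB₁ : B₁ ∈ E'.blocks) (hB₂ : B₂ ∈ E'.blocks) (hne : B₁ ≠ B₂)
    (hB : B ∈ E.blocks) (h₁ : B₁ ⊆ B) (h₂ : B₂ ⊆ B) :
    ∀ n (A C : Finset (Fin N)), A.card ≤ n → s(A, C) ∈ E.splits → B₁ ⊆ A → B₂ ⊆ C →
      ∃ A C, s(A, C) ∈ E.splits ∧ B₁ ⊆ A ∧ B₂ ⊆ C ∧ s(A, C) ∈ Rcut E' E := by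
  obtain ⟨u, hu⟩ := E'.nonempty_blocks B₁ hB₁
  intro n
  induction n with
  | zero =>
    intro A C hcard hs hA hC
    have : A = ∅ := Finset.card_eq_zero.mp (Nat.le_zero.mp hcard)
    exact absurd (this ▸ hA hu) (Finset.notMem_empty u)
  | succ n ih =>
    intro A C hcard hs hA hC
    by_cases hcut : s(A, C) ∈ Rcut E' E
    · exact ⟨A, C, hs, hA, hC, hcut⟩
    · -- there is a block B₃ of E' validly cut by s(A,C)
      have : ¬ (∀ B' ∈ E'.blocks, ¬ ValidRestrict s(A, C) B') := fun hall => hcut ⟨hs, hall⟩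
      push_neg at this
      obtain ⟨B₃, hB₃, hvr⟩ := this
      obtain ⟨hAB₃, hCB₃⟩ := valid_both hvr
      obtain ⟨hblk, hdisj⟩ := split_props hs
      have hACB : A ∪ C = B :=
        block_eq_of_mem hblk hB (Finset.mem_union_left _ (hA hu)) (h₁ hu)
      -- B₃ ≠ B₁, B₃ ⊆ B
      have hne₃ : B₁ ≠ B₃ := by
        rintro rfl
        obtain ⟨y, hy⟩ := hCB₃
        exact Finset.disjoint_left.mp hdisj (hA (Finset.mem_inter.mp hy).2)
          (Finset.mem_inter.mp hy).1
      obtain ⟨x₀, hx₀⟩ := hAB₃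
      have hx₀A : x₀ ∈ A := (Finset.mem_inter.mp hx₀).1
      have hx₀B₃ : x₀ ∈ B₃ := (Finset.mem_inter.mp hx₀).2
      obtain ⟨D, hD, hB₃D⟩ := h.1 B₃ hB₃
      have hDB : D = B := block_eq_of_mem hD hB (hB₃D hx₀B₃)
        (hACB ▸ Finset.mem_union_left _ hx₀A)
      have hB₃B : B₃ ⊆ B := hDB ▸ hB₃D
      -- cut property for B₁, B₃
      obtain ⟨A', C', hs', hA', hC'⟩ := h.2.2 B₁ hB₁ B₃ hB₃ hne₃ B hB h₁ hB₃B
      obtain ⟨hblk', hdisj'⟩ := split_props hs'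
      have hACB' : A' ∪ C' = B :=
        block_eq_of_mem hblk' hB (Finset.mem_union_left _ (hA' hu)) (h₁ hu)
      -- compatibility
      have hcomp := compat_four (E.compat _ hs _ hs' (by
        show blockOf s(A, C) = blockOf s(A', C')
        have : blockOf s(A, C) = A ∪ C := rfl
        have : blockOf s(A', C') = A' ∪ C' := rfl
        simp only [blockOf, Sym2.lift_mk]
        rw [hACB, hACB']))
      have hCA' : C ∩ A' = ∅ := by
        rcases hcomp with hh | hh | hh | hh
        · exact absurd hh (Finset.nonempty_iff_ne_empty.mp ⟨u, Finset.mem_inter.mpr ⟨hA hu, hA' hu⟩⟩)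
        · exact absurd hh (Finset.nonempty_iff_ne_empty.mp
            ⟨x₀, Finset.mem_inter.mpr ⟨hx₀A, hC' hx₀B₃⟩⟩)
        · exact hh
        · obtain ⟨y, hy⟩ := hCB₃
          exact absurd hh (Finset.nonempty_iff_ne_empty.mp
            ⟨y, Finset.mem_inter.mpr ⟨(Finset.mem_inter.mp hy).1, hC' (Finset.mem_inter.mp hy).2⟩⟩)
      have hA'A : A' ⊆ A := by
        intro x hx
        have hxB : x ∈ A ∪ C := hACB.symm ▸ hACB' ▸ Finset.mem_union_left _ hx
        rcases Finset.mem_union.mp hxB with hxA | hxC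
        · exact hxA
        · exact absurd (Finset.mem_inter.mpr ⟨hxC, hx⟩) (by simp [hCA'])
      have hB₂C' : B₂ ⊆ C' := by
        intro x hx
        have hxB : x ∈ A' ∪ C' := hACB'.symm ▸ hACB ▸ Finset.mem_union_right _ (hC hx)
        rcases Finset.mem_union.mp hxB with hxA' | hxC'
        · exact absurd (Finset.mem_inter.mpr ⟨hC hx, hxA'⟩) (by simp [hCA'])
        · exact hxC'
      have hx₀nA' : x₀ ∉ A' := fun hmem =>
        Finset.disjoint_left.mp hdisj' hmem (hC' hx₀B₃)
      have hss : A' ⊂ A := ⟨hA'A, fun hAA' => hx₀nA' (hAA' hx₀A)⟩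
      have hcard' : A'.card ≤ n := by
        have := Finset.card_lt_card hss
        omega
      exact ih A' C' hcard' hs' hA' hB₂C'

end Wald

open Wald in
/-- For `E' ≤ E`, if two distinct blocks `B₁, B₂` of `E'` are
contained in a common block `B` of `E`, then there is a split `A|C ∈ E` with
`B₁ ⊆ A`, `B₂ ⊆ C` lying in `R_cut`, i.e. admitting no valid restriction to any
block of `E'`. -/
theorem stmt_12 {N : ℕ} (E' E : WaldTop N) (h : LE' E' E)
    (B₁ B₂ : Finset (Fin N)) (hB₁ : B₁ ∈ E'.blocks) (hB₂ : B₂ ∈ E'.blocks)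
    (hne : B₁ ≠ B₂) (B : Finset (Fin N)) (hB : B ∈ E.blocks)
    (h₁ : B₁ ⊆ B) (h₂ : B₂ ⊆ B) :
    ∃ A C : Finset (Fin N), s(A, C) ∈ E.splits ∧ B₁ ⊆ A ∧ B₂ ⊆ C ∧
      s(A, C) ∈ Rcut E' E := by
  obtain ⟨A₀, C₀, hs, hb1, hb2⟩ := h.2.2 B₁ hB₁ B₂ hB₂ hne B hB h₁ h₂
  exact key h hB₁ hB₂ hne hB h₁ h₂ A₀.card A₀ C₀ le_rfl hs hb1 hb2
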